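/- The plane curve C₁₂ defined by Z¹² + F₁₂(X,Y) = 0 is smooth: there is no nonzero vector (x,y,z) ∈ ℂ³ at which all three partial derivatives of the polynomial Z¹² + F₁₂(X,Y) vanish simultaneously. -/
import Mathlib


noncomputable section
open MvPolynomial

lemma pderiv_ofNat11 (i : Fin 3) : pderiv i (11 : MvPolynomial (Fin 3) ℂ) = 0 := by
  rw [show (11 : MvPolynomial (Fin 3) ℂ) = C 11 from (map_ofNat C 11).symm, pderiv_C]

/-- `G = Z¹² + F₁₂(X, Y)` with `X = X 0`, `Y = X 1`, `Z = X 2`. -/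
def G12 : MvPolynomial (Fin 3) ℂ :=
  X 2 ^ 12 + X 0 * X 1 * (X 0 ^ 10 + 11 * X 0 ^ 5 * X 1 ^ 5 - X 1 ^ 10)

theorem stmt5 :
    ¬ ∃ v : Fin 3 → ℂ, v ≠ 0 ∧ ∀ i : Fin 3, eval v (pderiv i G12) = 0 := by
  rintro ⟨v, hv, h⟩
  have h0 := h 0
  have h1 := h 1
  have h2 := h 2
  simp [G12, pderiv_X, pderiv_ofNat11] at h0 h1 h2
  ring_nf at h0 h1 h2
  set x := v 0 with hxdef
  set y := v 1 with hydef
  set z := v 2 with hzdef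
  have hz : z = 0 := h2
  have hy : y = 0 := by
    by_contra hy
    by_cases hx : x = 0
    · apply hy
      have : y ^ 11 = 0 := by rw [hxdef] at hx; linear_combination -h0 + (66 * x ^ 4 * y ^ 6 + 11 * x ^ 9 * y) * hx
      exact pow_eq_zero_iff (n := 11) (by norm_num) |>.mp this
    · have hA : 11 * x ^ 10 + 66 * x ^ 5 * y ^ 5 - y ^ 10 = 0 := by
        apply mul_left_cancel₀ hy
        linear_combination h0
      have hB : x ^ 10 + 66 * x ^ 5 * y ^ 5 - 11 * y ^ 10 = 0 := by
        apply mul_left_cancel₀ hx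
        linear_combination h1
      have : y ^ 20 = 0 := by
        linear_combination ((728 * y ^ 10 + 11 * x ^ 5 * y ^ 5) / 7500) * hA +
          ((-748 * y ^ 10 - 121 * x ^ 5 * y ^ 5) / 7500) * hB
      exact hy (pow_eq_zero_iff (n := 20) (by norm_num) |>.mp this)
  have hx : x = 0 := by
    have : x ^ 11 = 0 := by
      linear_combination h1 + (11 * y ^ 9 * x - 66 * x ^ 6 * y ^ 4) * hy
    exact pow_eq_zero_iff (n := 11) (by norm_num) |>.mp this
  apply hv
  funext i
  fin_cases i <;> simp [← hxdef, ← hydef, ← hzdef, hx, hy, hz]
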